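/- Fix integers p ≥ 1 and n ≥ 1, a point θ₀ ∈ ℝ^p, vectors g_1,…,g_n ∈ ℝ^p, rewards r_1,…,r_n ∈ ℝ, and reals λ > 0, m > 0. Let b : ℝ → ℝ be twice differentiable with constants 0 < L_b ≤ 1 ≤ U_b satisfying L_b ≤ b''(z) ≤ U_b for all z ∈ ℝ. Define ℓ_λ(θ) := ∑_{s=1}^n ( r_s·⟨g_s, θ − θ₀⟩ − b(⟨g_s, θ − θ₀⟩) ) − (m·λ/2)·‖θ − θ₀‖₂² and Z̄ := λ·I + (1/m)·∑_{s=1}^n g_s g_sᵀ. Let α ≥ 0, let g_i, g_j ∈ ℝ^p, and let θ_i and θ_j be global maximizers over ℝ^p of θ ↦ ℓ_λ(θ) + α·⟨g_i, θ − θ₀⟩ and θ ↦ ℓ_λ(θ) + α·⟨g_j, θ − θ₀⟩ respectively. Then ℓ_λ(θ_i) − ℓ_λ(θ_j) ≤ ( U_b·α² / (m·L_b²) ) · ‖g_j‖²_{Z̄⁻¹}. -/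

import Mathlib

open Matrix

/-- The regularized exponential-family surrogate log-likelihood
ℓ_λ(θ) = ∑_s ( r_s·⟨g_s, θ−θ₀⟩ − b(⟨g_s, θ−θ₀⟩) ) − (mλ/2)·‖θ−θ₀‖₂². -/
noncomputable def ellLam {p n : ℕ} (θ₀ : Fin p → ℝ) (g : Fin n → Fin p → ℝ)
    (r : Fin n → ℝ) (b : ℝ → ℝ) (lam m : ℝ) (θ : Fin p → ℝ) : ℝ :=
  (∑ s, (r s * (g s ⬝ᵥ (θ - θ₀)) - b (g s ⬝ᵥ (θ - θ₀))))
    - m * lam / 2 * (∑ i, (θ i - θ₀ i) ^ 2)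

/-- The regularized Gram matrix Z̄ = λ·I + (1/m)·∑_s g_s g_sᵀ. -/
noncomputable def gramMat {p n : ℕ} (g : Fin n → Fin p → ℝ) (lam m : ℝ) :
    Matrix (Fin p) (Fin p) ℝ :=
  lam • (1 : Matrix (Fin p) (Fin p) ℝ) + (1 / m) • ∑ s, vecMulVec (g s) (g s)

lemma sum_vmv_mulVec {p n : ℕ} (g : Fin n → Fin p → ℝ) (y : Fin p → ℝ) :
    (∑ s, vecMulVec (g s) (g s)) *ᵥ y = ∑ s, (g s ⬝ᵥ y) • g s := by
  funext i
  calc ((∑ s, vecMulVec (g s) (g s)) *ᵥ y) i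
      = ∑ j, (∑ s, g s i * g s j) * y j := by
        simp [mulVec, dotProduct, Matrix.sum_apply, vecMulVec_apply]
    _ = ∑ j, ∑ s, g s i * g s j * y j := by simp [Finset.sum_mul]
    _ = ∑ s, ∑ j, g s i * g s j * y j := Finset.sum_comm
    _ = (∑ s, (g s ⬝ᵥ y) • g s) i := by
        simp only [Finset.sum_apply, Pi.smul_apply, smul_eq_mul]
        refine Finset.sum_congr rfl fun s _ => ?_
        rw [dotProduct, Finset.sum_mul]
        exact Finset.sum_congr rfl fun j _ => by ring

lemma dot_smul_sum {p n : ℕ} (g : Fin n → Fin p → ℝ) (c : Fin n → ℝ) (x : Fin p → ℝ) :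
    x ⬝ᵥ (∑ s, c s • g s) = ∑ s, (g s ⬝ᵥ x) * c s := by
  calc x ⬝ᵥ (∑ s, c s • g s)
      = ∑ j, x j * (∑ s, c s * g s j) := by
        simp [dotProduct, Finset.sum_apply]
    _ = ∑ j, ∑ s, x j * (c s * g s j) := by simp [Finset.mul_sum]
    _ = ∑ s, ∑ j, x j * (c s * g s j) := Finset.sum_comm
    _ = ∑ s, (g s ⬝ᵥ x) * c s := by
        refine Finset.sum_congr rfl fun s _ => ?_
        rw [dotProduct, Finset.sum_mul]
        exact Finset.sum_congr rfl fun j _ => by ring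

lemma dot_gram {p n : ℕ} (g : Fin n → Fin p → ℝ) (lam m : ℝ) (x y : Fin p → ℝ) :
    x ⬝ᵥ (gramMat g lam m) *ᵥ y = lam * (x ⬝ᵥ y) + (1/m) * ∑ s, (g s ⬝ᵥ x) * (g s ⬝ᵥ y) := by
  simp only [gramMat, add_mulVec, smul_mulVec, one_mulVec, dotProduct_add,
    dotProduct_smul, smul_eq_mul, sum_vmv_mulVec, dot_smul_sum]

lemma gram_herm {p n : ℕ} (g : Fin n → Fin p → ℝ) (lam m : ℝ) :
    (gramMat g lam m).IsHermitian := by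
  unfold Matrix.IsHermitian
  ext i j
  simp [gramMat, Matrix.conjTranspose_apply, Matrix.add_apply, Matrix.smul_apply,
    Matrix.one_apply, Matrix.sum_apply, vecMulVec_apply, eq_comm, mul_comm]

lemma gram_posdef {p n : ℕ} (g : Fin n → Fin p → ℝ) {lam m : ℝ} (hlam : 0 < lam) (hm : 0 < m) :
    (gramMat g lam m).PosDef := by
  refine posDef_iff_dotProduct_mulVec.mpr ⟨gram_herm g lam m, fun x hx => ?_⟩
  rw [star_trivial, dot_gram]
  have h1 : 0 < x ⬝ᵥ x := by
    rw [dotProduct]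
    obtain ⟨i, hi⟩ := Function.ne_iff.mp hx
    exact Finset.sum_pos' (fun j _ => mul_self_nonneg _)
      ⟨i, Finset.mem_univ i, mul_self_pos.mpr hi⟩
  have h2 : 0 ≤ ∑ s, (g s ⬝ᵥ x) * (g s ⬝ᵥ x) :=
    Finset.sum_nonneg fun s _ => mul_self_nonneg _
  have h3 : 0 < lam * (x ⬝ᵥ x) := mul_pos hlam h1
  have h4 : 0 ≤ (1/m) * ∑ s, (g s ⬝ᵥ x) * (g s ⬝ᵥ x) := by positivity
  linarith

lemma mid_b (b : ℝ → ℝ) (Lb : ℝ)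
    (hb : Differentiable ℝ b) (hb' : Differentiable ℝ (deriv b))
    (hlow : ∀ z : ℝ, Lb ≤ deriv (deriv b) z) (a c : ℝ) :
    b ((a + c) / 2) ≤ (b a + b c) / 2 - Lb / 8 * (a - c) ^ 2 := by
  set h : ℝ → ℝ := fun z => b z - Lb / 2 * z ^ 2 with hh
  have hq : Differentiable ℝ (fun z : ℝ => Lb / 2 * z ^ 2) :=
    (differentiable_pow 2).const_mul _
  have hderiv : deriv h = fun z => deriv b z - Lb * z := by
    funext z
    have h2 : HasDerivAt (fun z : ℝ => Lb / 2 * z ^ 2) (Lb * z) z := by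
      have := (hasDerivAt_pow 2 z).const_mul (Lb / 2)
      refine this.congr_deriv ?_
      simp; ring
    exact ((hb z).hasDerivAt.sub h2).deriv
  have hderiv2 : ∀ z, deriv (deriv h) z = deriv (deriv b) z - Lb := by
    intro z
    rw [hderiv]
    have h2 : HasDerivAt (fun z : ℝ => Lb * z) Lb z := by
      simpa using (hasDerivAt_id z).const_mul Lb
    exact ((hb' z).hasDerivAt.sub h2).deriv
  have hconv : ConvexOn ℝ Set.univ h := by
    refine convexOn_of_deriv2_nonneg convex_univ
      (hb.continuous.sub hq.continuous).continuousOn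
      (hb.sub hq).differentiableOn ?_ ?_
    · rw [interior_univ, hderiv]
      exact (hb'.sub (differentiable_id.const_mul Lb)).differentiableOn
    · intro x _
      have : deriv^[2] h x = deriv (deriv h) x := by
        simp [Function.iterate_succ, Function.iterate_zero, Function.comp]
      rw [this, hderiv2]
      linarith [hlow x]
  have hm := hconv.2 (Set.mem_univ a) (Set.mem_univ c)
    (by norm_num : (0:ℝ) ≤ 1/2) (by norm_num : (0:ℝ) ≤ 1/2) (by norm_num)
  simp only [smul_eq_mul, hh] at hm
  have heq : (1:ℝ)/2 * a + 1/2 * c = (a + c)/2 := by ring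
  rw [heq] at hm
  nlinarith [hm]

/-- ℓ_λ(θ_i) − ℓ_λ(θ_j) ≤ (U_b·α²/(m·L_b²))·‖g_j‖²_{Z̄⁻¹}, where θ_i and θ_j
are the RBMLE estimates for arm features g_i and g_j respectively. -/
theorem stmt8 {p n : ℕ} (hp : 1 ≤ p) (hn : 1 ≤ n)
    (θ₀ : Fin p → ℝ) (g : Fin n → Fin p → ℝ) (r : Fin n → ℝ)
    (lam m : ℝ) (hlam : 0 < lam) (hm : 0 < m)
    (b : ℝ → ℝ) (Lb Ub : ℝ) (hLb : 0 < Lb) (hLb1 : Lb ≤ 1) (hUb : 1 ≤ Ub)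
    (hb : Differentiable ℝ b) (hb' : Differentiable ℝ (deriv b))
    (hlow : ∀ z : ℝ, Lb ≤ deriv (deriv b) z) (hup : ∀ z : ℝ, deriv (deriv b) z ≤ Ub)
    (α : ℝ) (hα : 0 ≤ α) (gi gj : Fin p → ℝ)
    (θi : Fin p → ℝ)
    (hθi : ∀ θ : Fin p → ℝ, ellLam θ₀ g r b lam m θ + α * (gi ⬝ᵥ (θ - θ₀)) ≤
        ellLam θ₀ g r b lam m θi + α * (gi ⬝ᵥ (θi - θ₀)))
    (θj : Fin p → ℝ)
    (hθj : ∀ θ : Fin p → ℝ, ellLam θ₀ g r b lam m θ + α * (gj ⬝ᵥ (θ - θ₀)) ≤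
        ellLam θ₀ g r b lam m θj + α * (gj ⬝ᵥ (θj - θ₀))) :
    ellLam θ₀ g r b lam m θi - ellLam θ₀ g r b lam m θj ≤
      Ub * α ^ 2 / (m * Lb ^ 2) * (gj ⬝ᵥ (gramMat g lam m)⁻¹.mulVec gj) := by
  set d : Fin p → ℝ := θj - θi with hd
  set y : Fin p → ℝ := fun k => (θi k + θj k) / 2 with hy0
  set T : ℝ := ∑ s, (g s ⬝ᵥ d) ^ 2 with hT
  set U : ℝ := ∑ k, (θj k - θi k) ^ 2 with hU
  have hTnn : 0 ≤ T := Finset.sum_nonneg fun s _ => sq_nonneg _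
  have hUnn : 0 ≤ U := Finset.sum_nonneg fun k _ => sq_nonneg _
  -- basic linear identities
  have h1 : (θi - θ₀) + (θj - θ₀) = (2:ℝ) • (y - θ₀) := by
    funext k; simp [hy0]; ring
  have hac : ∀ s : Fin n, g s ⬝ᵥ (θi - θ₀) + g s ⬝ᵥ (θj - θ₀) = 2 * (g s ⬝ᵥ (y - θ₀)) := by
    intro s
    rw [← dotProduct_add, h1, dotProduct_smul, smul_eq_mul]
  have hac2 : ∀ s : Fin n, g s ⬝ᵥ (θi - θ₀) - g s ⬝ᵥ (θj - θ₀) = -(g s ⬝ᵥ d) := by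
    intro s
    rw [← dotProduct_sub]
    have h2 : (θi - θ₀) - (θj - θ₀) = (-1:ℝ) • d := by
      funext k; simp [hd]
    rw [h2, dotProduct_smul]; simp
  -- per-summand strong concavity at the midpoint
  have hper : ∀ s : Fin n,
      (r s * (g s ⬝ᵥ (θi - θ₀)) - b (g s ⬝ᵥ (θi - θ₀))) / 2
      + (r s * (g s ⬝ᵥ (θj - θ₀)) - b (g s ⬝ᵥ (θj - θ₀))) / 2
      + Lb / 8 * (g s ⬝ᵥ d) ^ 2
      ≤ r s * (g s ⬝ᵥ (y - θ₀)) - b (g s ⬝ᵥ (y - θ₀)) := by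
    intro s
    have hmid : g s ⬝ᵥ (y - θ₀) = (g s ⬝ᵥ (θi - θ₀) + g s ⬝ᵥ (θj - θ₀)) / 2 := by
      have := hac s; linarith
    have hb8 := mid_b b Lb hb hb' hlow (g s ⬝ᵥ (θi - θ₀)) (g s ⬝ᵥ (θj - θ₀))
    have hsq : Lb / 8 * (g s ⬝ᵥ (θi - θ₀) - g s ⬝ᵥ (θj - θ₀)) ^ 2
        = Lb / 8 * (g s ⬝ᵥ d) ^ 2 := by
      rw [hac2 s]; ring
    rw [hmid]
    have hr : r s * ((g s ⬝ᵥ (θi - θ₀) + g s ⬝ᵥ (θj - θ₀)) / 2)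
        = (r s * (g s ⬝ᵥ (θi - θ₀)) + r s * (g s ⬝ᵥ (θj - θ₀))) / 2 := by ring
    rw [hr]
    linarith [hb8, hsq.le, hsq.ge]
  have hsum : (∑ s, (r s * (g s ⬝ᵥ (θi - θ₀)) - b (g s ⬝ᵥ (θi - θ₀)))) / 2
      + (∑ s, (r s * (g s ⬝ᵥ (θj - θ₀)) - b (g s ⬝ᵥ (θj - θ₀)))) / 2
      + Lb / 8 * T
      ≤ ∑ s, (r s * (g s ⬝ᵥ (y - θ₀)) - b (g s ⬝ᵥ (y - θ₀))) := by
    have := Finset.sum_le_sum (fun s (_ : s ∈ Finset.univ) => hper s)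
    rw [Finset.sum_add_distrib, Finset.sum_add_distrib, ← Finset.sum_div, ← Finset.sum_div,
      ← Finset.mul_sum] at this
    exact this
  -- quadratic norm identity at the midpoint
  have hnorm : (∑ k, (y k - θ₀ k) ^ 2)
      = (∑ k, (θi k - θ₀ k) ^ 2) / 2 + (∑ k, (θj k - θ₀ k) ^ 2) / 2 - U / 4 := by
    have hk : ∑ k, (y k - θ₀ k) ^ 2
        = ∑ k, ((θi k - θ₀ k) ^ 2 / 2 + (θj k - θ₀ k) ^ 2 / 2 - (θj k - θi k) ^ 2 / 4) :=
      Finset.sum_congr rfl fun k _ => by simp only [hy0]; ring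
    rw [hk, Finset.sum_sub_distrib, Finset.sum_add_distrib, ← Finset.sum_div, ← Finset.sum_div,
      ← Finset.sum_div, ← hU]
  -- linear term identity
  have hlin : gj ⬝ᵥ (y - θ₀) = (gj ⬝ᵥ (θi - θ₀) + gj ⬝ᵥ (θj - θ₀)) / 2 := by
    have : gj ⬝ᵥ (θi - θ₀) + gj ⬝ᵥ (θj - θ₀) = 2 * (gj ⬝ᵥ (y - θ₀)) := by
      rw [← dotProduct_add, h1, dotProduct_smul, smul_eq_mul]
    linarith
  have hzi : gj ⬝ᵥ (θj - θ₀) - gj ⬝ᵥ (θi - θ₀) = gj ⬝ᵥ d := by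
    rw [← dotProduct_sub]
    congr 1
    funext k; simp [hd]
  -- key strong-concavity consequence
  have key1 : ellLam θ₀ g r b lam m θi - ellLam θ₀ g r b lam m θj ≤
      α * (gj ⬝ᵥ d) - Lb / 4 * T - m * lam / 4 * U := by
    have hyj := hθj y
    simp only [ellLam] at hyj ⊢
    have hα1 : α * (gj ⬝ᵥ (y - θ₀)) = (α * (gj ⬝ᵥ (θi - θ₀)) + α * (gj ⬝ᵥ (θj - θ₀))) / 2 := by
      rw [hlin]; ring
    have hα2 : α * (gj ⬝ᵥ (θj - θ₀)) - α * (gj ⬝ᵥ (θi - θ₀)) = α * (gj ⬝ᵥ d) := by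
      rw [← hzi]; ring
    have hn2 : m * lam / 2 * (∑ k, (y k - θ₀ k) ^ 2)
        = m * lam / 2 * ((∑ k, (θi k - θ₀ k) ^ 2) / 2 + (∑ k, (θj k - θ₀ k) ^ 2) / 2)
          - m * lam / 8 * U := by
      rw [hnorm]; ring
    linarith [hsum, hyj, hn2, hα1, hα2]
  -- Step 2: completing the square with the Gram matrix
  set Z : Matrix (Fin p) (Fin p) ℝ := gramMat g lam m with hZ
  have hpd : Z.PosDef := gram_posdef g hlam hm
  set w : Fin p → ℝ := Z⁻¹ *ᵥ gj with hw
  set S : ℝ := gj ⬝ᵥ w with hS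
  have hSnn : 0 ≤ S := by
    have := (hpd.inv.posSemidef).dotProduct_mulVec_nonneg gj
    rwa [star_trivial] at this
  have hZw : Z *ᵥ w = gj := by
    rw [hw, mulVec_mulVec, Matrix.mul_nonsing_inv _ hpd.det_pos.ne'.isUnit, one_mulVec]
  have hsymm : w ⬝ᵥ (Z *ᵥ d) = gj ⬝ᵥ d := by
    have h1 : w ⬝ᵥ (Z *ᵥ d) = d ⬝ᵥ (Z *ᵥ w) := by
      rw [hZ, dot_gram, dot_gram, dotProduct_comm w d]
      congr 1
      rw [mul_comm (1/m), mul_comm (1/m)]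
      congr 1
      exact Finset.sum_congr rfl fun s _ => mul_comm _ _
    rw [h1, hZw, dotProduct_comm]
  set c : ℝ := 2 * α / (Lb * m) with hc
  set e : Fin p → ℝ := d - c • w with he
  have hee : 0 ≤ e ⬝ᵥ Z *ᵥ e := by
    have := (hpd.posSemidef).dotProduct_mulVec_nonneg e
    rwa [star_trivial] at this
  have hexp : e ⬝ᵥ Z *ᵥ e = d ⬝ᵥ Z *ᵥ d - 2 * c * (gj ⬝ᵥ d) + c ^ 2 * S := by
    have hZe : Z *ᵥ e = Z *ᵥ d - c • gj := by
      rw [he, mulVec_sub, mulVec_smul, hZw]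
    rw [hZe, he]
    simp only [sub_dotProduct, dotProduct_sub, smul_dotProduct, dotProduct_smul, smul_eq_mul]
    rw [hsymm, dotProduct_comm d gj, dotProduct_comm w gj, ← hS]
    ring
  have hdd : d ⬝ᵥ d = U := by
    rw [dotProduct, hU]
    refine Finset.sum_congr rfl fun k _ => ?_
    rw [hd]
    simp [sq]
  have hdZd : m * (d ⬝ᵥ Z *ᵥ d) = m * lam * U + T := by
    rw [hZ, dot_gram, hdd]
    have hTT : ∑ s, (g s ⬝ᵥ d) * (g s ⬝ᵥ d) = T := by
      rw [hT]; exact Finset.sum_congr rfl fun s _ => (sq _).symm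
    rw [hTT]
    field_simp
  -- combine
  have hLm : (0:ℝ) < Lb * m := mul_pos hLb hm
  have h5 : 0 ≤ Lb * m / 4 * (d ⬝ᵥ Z *ᵥ d - 2 * c * (gj ⬝ᵥ d) + c ^ 2 * S) := by
    rw [← hexp]
    exact mul_nonneg (by positivity) hee
  have h6 : Lb * m / 4 * (d ⬝ᵥ Z *ᵥ d) = Lb / 4 * (m * lam * U + T) := by
    rw [← hdZd]; ring
  have h7 : Lb * m / 4 * (2 * c * (gj ⬝ᵥ d)) = α * (gj ⬝ᵥ d) := by
    rw [hc]; field_simp; ring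
  have h8 : Lb * m / 4 * (c ^ 2 * S) = α ^ 2 * S / (Lb * m) := by
    rw [hc]; field_simp; ring
  have h9 : α * (gj ⬝ᵥ d) ≤ Lb / 4 * (m * lam * U + T) + α ^ 2 * S / (Lb * m) := by
    linarith [h5, h6, h7, h8]
  have h10 : α ^ 2 * S / (Lb * m) ≤ Ub * α ^ 2 / (m * Lb ^ 2) * S := by
    have heq : Ub * α ^ 2 / (m * Lb ^ 2) * S - α ^ 2 * S / (Lb * m)
        = α ^ 2 * S * (Ub - Lb) / (m * Lb ^ 2) := by
      field_simp
    have hnum : 0 ≤ α ^ 2 * S * (Ub - Lb) :=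
      mul_nonneg (mul_nonneg (sq_nonneg α) hSnn) (by linarith)
    have hpos : 0 ≤ α ^ 2 * S * (Ub - Lb) / (m * Lb ^ 2) :=
      div_nonneg hnum (by positivity)
    linarith
  have h11 : Lb / 4 * (m * lam * U) ≤ m * lam / 4 * U := by
    have h0 : 0 ≤ (1 - Lb) * (m * lam * U) :=
      mul_nonneg (by linarith) (mul_nonneg (mul_pos hm hlam).le hUnn)
    linarith [h0]
  calc ellLam θ₀ g r b lam m θi - ellLam θ₀ g r b lam m θj
      ≤ α * (gj ⬝ᵥ d) - Lb / 4 * T - m * lam / 4 * U := key1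
    _ ≤ Ub * α ^ 2 / (m * Lb ^ 2) * S := by linarith [h9, h10, h11]
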